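/- Under the setting of the least Frobenius norm updating model: if L_α is a polynomial of degree at most 1 (so ∇²L_α = 0) and the interpolation set X contains at least n+1 points such that the least-Frobenius-norm interpolant of L_α on X is L_α itself, then for any f and any C₁, C₂ ∈ ℝ, M^X_{L_α}(C₁f + C₂) = C₁·M^X_{L_α}(f) + C₂. That is, when the base model is linear, the least Frobenius norm updating model commutes with affine transformations of the objective. -/

import Mathlib

structure Quad (n : ℕ) where
  c : ℝ
  g : Fin n → ℝ
  A : Matrix (Fin n) (Fin n) ℝ
  symm : A.IsSymm

namespace Quad
variable {n : ℕ}

noncomputable def eval (Q : Quad n) (x : Fin n → ℝ) : ℝ :=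
  Q.c + (∑ i, Q.g i * x i) + (1 / 2) * ∑ i, ∑ j, x i * Q.A i j * x j

def add (P Q : Quad n) : Quad n :=
  ⟨P.c + Q.c, P.g + Q.g, P.A + Q.A, P.symm.add Q.symm⟩

def sub (P Q : Quad n) : Quad n :=
  ⟨P.c - Q.c, P.g - Q.g, P.A - Q.A, P.symm.sub Q.symm⟩

def smul (r : ℝ) (Q : Quad n) : Quad n :=
  ⟨r * Q.c, r • Q.g, r • Q.A, by
    simp only [Matrix.IsSymm, Matrix.transpose_smul, Q.symm.eq]⟩

def addConst (Q : Quad n) (r : ℝ) : Quad n := ⟨Q.c + r, Q.g, Q.A, Q.symm⟩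

protected def zero : Quad n := ⟨0, 0, 0, by simp [Matrix.IsSymm]⟩

end Quad

noncomputable def frobSq {n : ℕ} (M : Matrix (Fin n) (Fin n) ℝ) : ℝ := ∑ i, ∑ j, (M i j) ^ 2

def Interpolates {n m : ℕ} (Q : Quad n) (h : (Fin n → ℝ) → ℝ)
    (x : Fin m → (Fin n → ℝ)) : Prop :=
  ∀ i, Q.eval (x i) = h (x i)

def IsLFNModel {n m : ℕ} (B : Quad n) (h : (Fin n → ℝ) → ℝ)
    (x : Fin m → (Fin n → ℝ)) (Q : Quad n) : Prop :=
  Interpolates Q h x ∧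
    ∀ Q' : Quad n, Interpolates Q' h x → frobSq (Q.A - B.A) ≤ frobSq (Q'.A - B.A)

lemma Quad.eval_smul {n : ℕ} (Q : Quad n) (r : ℝ) (y : Fin n → ℝ) :
    (Q.smul r).eval y = r * Q.eval y := by
  simp only [Quad.eval, Quad.smul, Pi.smul_apply, Matrix.smul_apply, smul_eq_mul,
    mul_add, Finset.mul_sum]
  congr 1
  · congr 1
    exact Finset.sum_congr rfl fun i _ => by ring
  · exact Finset.sum_congr rfl fun i _ => Finset.sum_congr rfl fun j _ => by ring

lemma Quad.eval_addConst {n : ℕ} (Q : Quad n) (s : ℝ) (y : Fin n → ℝ) :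
    (Q.addConst s).eval y = Q.eval y + s := by
  simp only [Quad.eval, Quad.addConst]; ring

lemma frobSq_nonneg {n : ℕ} (A : Matrix (Fin n) (Fin n) ℝ) : 0 ≤ frobSq A := by
  unfold frobSq; positivity

lemma frobSq_smul {n : ℕ} (r : ℝ) (A : Matrix (Fin n) (Fin n) ℝ) :
    frobSq (r • A) = r ^ 2 * frobSq A := by
  simp [frobSq, Finset.mul_sum, mul_pow]

/-- Corollary `full`: if the base model `L_α` is linear (zero Hessian), `X` has at
least `n+1` points, and the least Frobenius norm interpolant of `L_α` on `X` is
`L_α` itself, then the least Frobenius norm updating model commutes with affine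
transformations: `M(C₁f + C₂) = C₁ M(f) + C₂`. -/
theorem lfn_updating_model_linear_base_commutes_with_affine
    {n m : ℕ} (hm : n + 1 ≤ m) (x : Fin m → (Fin n → ℝ)) (Lα : Quad n)
    (hLin : Lα.A = 0)
    (M : ((Fin n → ℝ) → ℝ) → Quad n)
    (hM : ∀ h : (Fin n → ℝ) → ℝ, (∃ Q : Quad n, Interpolates Q h x) →
      IsLFNModel Lα h x (M h) ∧ ∀ Q : Quad n, IsLFNModel Lα h x Q → Q = M h)
    (hLα : IsLFNModel Quad.zero Lα.eval x Lα ∧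
      ∀ Q : Quad n, IsLFNModel Quad.zero Lα.eval x Q → Q = Lα)
    (f : (Fin n → ℝ) → ℝ) (hf : ∃ Q : Quad n, Interpolates Q f x)
    (C₁ C₂ : ℝ) :
    M (fun y => C₁ * f y + C₂) = ((M f).smul C₁).addConst C₂ := by
  obtain ⟨Qf, hQf⟩ := hf
  have hh : ∃ Q : Quad n, Interpolates Q (fun y => C₁ * f y + C₂) x :=
    ⟨(Qf.smul C₁).addConst C₂, fun i => by
      rw [Quad.eval_addConst, Quad.eval_smul, hQf i]⟩
  obtain ⟨-, huniq⟩ := hM _ hh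
  obtain ⟨⟨hMfInt, hMfMin⟩, -⟩ := hM f ⟨Qf, hQf⟩
  refine (huniq _ ⟨fun i => ?_, fun Q' hQ' => ?_⟩).symm
  · rw [Quad.eval_addConst, Quad.eval_smul, hMfInt i]
  · show frobSq ((((M f).smul C₁).addConst C₂).A - Lα.A) ≤ frobSq (Q'.A - Lα.A)
    simp only [Quad.addConst, Quad.smul, hLin, sub_zero]
    by_cases hC : C₁ = 0
    · simpa [hC, frobSq] using frobSq_nonneg Q'.A
    · have hint : Interpolates ((Q'.addConst (-C₂)).smul C₁⁻¹) f x := fun i => by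
        rw [Quad.eval_smul, Quad.eval_addConst, hQ' i]
        field_simp
        ring
      have h1 := hMfMin _ hint
      simp only [Quad.smul, Quad.addConst, hLin, sub_zero] at h1
      rw [frobSq_smul] at h1 ⊢
      have h2 : (C₁⁻¹) ^ 2 > 0 := by positivity
      calc C₁ ^ 2 * frobSq (M f).A ≤ C₁ ^ 2 * ((C₁⁻¹) ^ 2 * frobSq Q'.A) := by
            nlinarith [sq_nonneg C₁]
        _ = frobSq Q'.A := by field_simp
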